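/- arXiv:1107.4073 — 3 statements merged into one kernel-verified Lean document; each statement's English description precedes it below -/
import Mathlib

section
/- For any binary word w of length n, any two maximal executions of the cyclic matching procedure produce the same set of matched pairs; that is, the set of matched pairs of w (and hence the set of unmatched positions) is well-defined, independent of the order in which matchings are performed. -/
/-!
Common definitions: binary words of length `n`, rotations, necklaces (the quotient
poset `Bₙ/Cₙ`), the cyclic matching procedure, Lyndon words, the map `φ`,
crossing pairs, and the words `w_t`.

Throughout, a binary word of length `n` is a function `Fin n → Bool`, where `true`
encodes the letter `1` and `false` the letter `0`.
-/

/-- A binary word of length `n`: `true` encodes the letter `1`, `false` the letter `0`. -/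
abbrev Word (n : ℕ) := Fin n → Bool

variable {n : ℕ} [NeZero n]

/-- The rotation `σ_i`, shifting the letters of `w` cyclically by `i` positions (so the
letter at position `j` of `w` appears at position `j + i` of `rot i w`). -/
def rot (i : Fin n) (w : Word n) : Word n := fun j => w (j - i)

lemma rot_rot (i j : Fin n) (w : Word n) : rot i (rot j w) = rot (j + i) w := by
  funext k
  simp [rot, sub_sub, add_comm]

/-- Two words are equivalent when one is a cyclic rotation of the other. -/
def rotSetoid (n : ℕ) [NeZero n] : Setoid (Word n) where
  r w w' := ∃ i : Fin n, rot i w = w'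
  iseqv := by
    refine ⟨fun w => ⟨0, ?_⟩, ?_, ?_⟩
    · funext j; simp [rot]
    · rintro w w' ⟨i, rfl⟩
      refine ⟨-i, ?_⟩
      rw [rot_rot]
      funext j; simp [rot]
    · rintro w w' w'' ⟨i, rfl⟩ ⟨j, rfl⟩
      exact ⟨i + j, (rot_rot j i w).symm⟩

/-- A necklace: an equivalence class of binary words under cyclic rotation. -/
abbrev Necklace (n : ℕ) [NeZero n] := Quotient (rotSetoid n)

/-- The necklace of a word. -/
def nec (w : Word n) : Necklace n := Quotient.mk (rotSetoid n) w

/-- The number of `1`s in a word. -/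
def wt (w : Word n) : ℕ := (Finset.univ.filter fun i => w i = true).card

/-- The number of `0`s in a word. -/
def zeros (w : Word n) : ℕ := (Finset.univ.filter fun i => w i = false).card

/-- The rank of a necklace: the number of `1`s in any representative. -/
noncomputable def rank (u : Necklace n) : ℕ := wt (Quotient.out u)

/-- The set of positions belonging to some pair of `M`. -/
def matchedPos (M : Finset (Fin n × Fin n)) : Finset (Fin n) :=
  M.image Prod.fst ∪ M.image Prod.snd

/-- `j` is the first position outside `S` encountered strictly after `i` in the cyclic
order `i+1, i+2, …` (indices mod `n`). -/
def FirstAfter (S : Finset (Fin n)) (i j : Fin n) : Prop :=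
  j ∉ S ∧ j ≠ i ∧ ∀ k : Fin n, k ∉ S → k ≠ i → (j - i).val ≤ (k - i).val

/-- One step of the cyclic matching procedure on the word `w`: choose an as-yet-unmatched
position `i` carrying the letter `0` such that the first as-yet-unmatched position `j`
after `i` in cyclic order carries the letter `1`, and declare `{i, j}` a matched pair
(recorded as the ordered pair `(i, j)`, the `0`-position first). -/
inductive MatchStep (w : Word n) :
    Finset (Fin n × Fin n) → Finset (Fin n × Fin n) → Prop
  | step {M : Finset (Fin n × Fin n)} {i j : Fin n}
      (hi : i ∉ matchedPos M) (hw : w i = false)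
      (hj : FirstAfter (matchedPos M) i j) (hj1 : w j = true) :
      MatchStep w M (insert (i, j) M)

/-- A maximal execution of the cyclic matching procedure on `w`, starting from the empty
matching: `M` is reachable from `∅` by matching steps and no further step is possible. -/
def IsMaximalMatching (w : Word n) (M : Finset (Fin n × Fin n)) : Prop :=
  Relation.ReflTransGen (MatchStep w) ∅ M ∧ ∀ M', ¬ MatchStep w M M'

/-- The cyclic matching of `w`: the set of matched pairs produced by (any) maximal
execution of the cyclic matching procedure. -/
noncomputable def matching (w : Word n) : Finset (Fin n × Fin n) :=
  letI := Classical.dec (∃ M, IsMaximalMatching w M)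
  if h : ∃ M, IsMaximalMatching w M then h.choose else ∅

/-- The unmatched positions of `w`: positions belonging to no matched pair. -/
noncomputable def unmatchedPos (w : Word n) : Finset (Fin n) :=
  Finset.univ \ matchedPos (matching w)

/-- Lexicographic comparison of words with respect to the letter order `1 ≺ 0`
(recall `true` encodes `1` and `false` encodes `0`). -/
def lexLE (w w' : Word n) : Prop :=
  w = w' ∨ ∃ i : Fin n, (∀ j : Fin n, j < i → w j = w' j) ∧ w i = true ∧ w' i = false

/-- A word is Lyndon if it is lexicographically smallest among all of its rotations,
with respect to the letter order `1 ≺ 0`. -/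
def IsLyndon (w : Word n) : Prop := ∀ i : Fin n, lexLE w (rot i w)

/-- The Lyndon rearrangement of `w`: its lexicographically smallest rotation. -/
noncomputable def lyndonOf (w : Word n) : Word n :=
  letI := Classical.dec (∃ i : Fin n, IsLyndon (rot i w))
  if h : ∃ i : Fin n, IsLyndon (rot i w) then rot h.choose w else w

/-- Change the letter at the rightmost unmatched position of `w` to `0`. -/
noncomputable def flipTop (w : Word n) : Word n :=
  if h : (unmatchedPos w).Nonempty then
    Function.update w ((unmatchedPos w).max' h) false
  else w

/-- The map `φ`: take the Lyndon rearrangement of a representative and change the letter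
at its rightmost unmatched position (which carries a `1` on the upper half of ranks)
to `0`. -/
noncomputable def phi (u : Necklace n) : Necklace n :=
  nec (flipTop (lyndonOf (Quotient.out u)))

/-- `x` lies strictly inside the cyclic arc running from `i` (exclusive) to `k`
(exclusive), in the cyclic order of positions. -/
def StrictBtw (i x k : Fin n) : Prop :=
  0 < (x - i).val ∧ (x - i).val < (k - i).val

/-- The pairs `{i, k}` and `{j, l}` cross: exactly one of `j, l` lies strictly inside one
of the two cyclic arcs determined by `i` and `k`. -/
def Crosses (i k j l : Fin n) : Prop := Xor' (StrictBtw i j k) (StrictBtw i l k)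

/-- `wT w t` is the word obtained from `w` by changing the letters at the last `t`
unmatched positions of `w` to `0`; that is, if the unmatched positions of `w` are
`p₁ < … < p_m`, the positions `p_{m-t+1}, …, p_m` are changed to `0`. -/
noncomputable def wT (w : Word n) (t : ℕ) : Word n := fun j =>
  if j ∈ unmatchedPos w ∧ ((unmatchedPos w).filter fun k => j ≤ k).card ≤ t then false
  else w j

/-- The order on necklaces (the poset `Bₙ/Cₙ`): `u ≤ v` iff there are representatives
`w` of `u` and `w'` of `v` such that every position carrying `1` in `w` also carries `1`
in `w'`. -/
def nle (u v : Necklace n) : Prop :=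
  ∃ w w' : Word n, nec w = u ∧ nec w' = v ∧ ∀ i, w i = true → w' i = true

/-- The strict order on necklaces. -/
def nlt (u v : Necklace n) : Prop := nle u v ∧ u ≠ v

/-- `v` covers `u` in `Bₙ/Cₙ`: `u < v` and there is no `z` with `u < z < v`. -/
def ncovBy (u v : Necklace n) : Prop := nlt u v ∧ ∀ z, nlt u z → ¬ nlt z v

/-- A chain top: a necklace `v` in the upper half of ranks (`2·rank v ≥ n`) which is not
the image under `φ` of any necklace in the strict upper half of ranks. -/
def IsChainTop (v : Necklace n) : Prop :=
  n ≤ 2 * rank v ∧ ∀ u : Necklace n, n < 2 * rank u → phi u ≠ v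

/-- The `φ`-string below the chain top `v`: the necklaces of the words `w_t`,
`0 ≤ t ≤ m`, where `w` is the Lyndon representative of `v` and `m = 2·rank v − n`. -/
noncomputable def chainOf (v : Necklace n) : Set (Necklace n) :=
  { u | ∃ t ≤ 2 * rank v - n, u = nec (wT (lyndonOf (Quotient.out v)) t) }

lemma fin_sub_val (x y : Fin n) :
    (x - y).val = if y.val ≤ x.val then x.val - y.val else x.val + n - y.val := by
  rcases x with ⟨a, ha⟩; rcases y with ⟨b, hb⟩
  simp only [Fin.sub_def]
  split_ifs with h
  · have : n - b + a = (a - b) + n := by omega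
    rw [this, Nat.add_mod_right, Nat.mod_eq_of_lt (by omega)]
  · rw [Nat.mod_eq_of_lt (by omega)]
    omega

lemma firstAfter_unique {S : Finset (Fin n)} {i j j' : Fin n}
    (h : FirstAfter S i j) (h' : FirstAfter S i j') : j = j' := by
  have h1 := h.2.2 j' h'.1 h'.2.1
  have h2 := h'.2.2 j h.1 h.2.1
  have hv : (j - i) = (j' - i) := Fin.val_injective (le_antisymm h1 h2)
  have := congrArg (· + i) hv
  simpa using this

lemma firstAfter_ne {S : Finset (Fin n)} {i i' j : Fin n}
    (hii' : i ≠ i') (hji' : j ≠ i')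
    (hi : i ∉ S) (hi' : i' ∉ S)
    (h : FirstAfter S i j) (h' : FirstAfter S i' j) : False := by
  have h1 : (j - i).val ≤ (i' - i).val := h.2.2 i' hi' hii'.symm
  have h2 : (j - i').val ≤ (i - i').val := h'.2.2 i hi hii'
  have hji : j ≠ i := h.2.1
  have d1 : j.val ≠ i.val := fun hh => hji (Fin.val_injective hh)
  have d2 : j.val ≠ i'.val := fun hh => hji' (Fin.val_injective hh)
  have d3 : i.val ≠ i'.val := fun hh => hii' (Fin.val_injective hh)
  have b1 := j.isLt; have b2 := i.isLt; have b3 := i'.isLt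
  rw [fin_sub_val j i, fin_sub_val i' i] at h1
  rw [fin_sub_val j i', fin_sub_val i i'] at h2
  split_ifs at h1 h2 <;> omega

lemma matchedPos_insert (p : Fin n × Fin n) (M : Finset (Fin n × Fin n)) :
    matchedPos (insert p M) = insert p.1 (insert p.2 (matchedPos M)) := by
  ext x
  simp only [matchedPos, Finset.image_insert, Finset.mem_union, Finset.mem_insert]
  tauto

lemma subset_matchedPos_insert (p : Fin n × Fin n) (M : Finset (Fin n × Fin n)) :
    matchedPos M ⊆ matchedPos (insert p M) := by
  rw [matchedPos_insert]
  exact fun x hx => Finset.mem_insert_of_mem (Finset.mem_insert_of_mem hx)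

lemma firstAfter_mono {S : Finset (Fin n)} {i j : Fin n} {T : Finset (Fin n)}
    (hST : S ⊆ T) (hjT : j ∉ T) (h : FirstAfter S i j) : FirstAfter T i j :=
  ⟨hjT, h.2.1, fun k hk hki => h.2.2 k (fun hkS => hk (hST hkS)) hki⟩

lemma matchStep_diamond {w : Word n} {M M1 M2 : Finset (Fin n × Fin n)}
    (h1 : MatchStep w M M1) (h2 : MatchStep w M M2) :
    M1 = M2 ∨ ∃ N, MatchStep w M1 N ∧ MatchStep w M2 N := by
  obtain ⟨i, j, hi, hwi, hj, hwj, rfl⟩ :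
      ∃ i j, i ∉ matchedPos M ∧ w i = false ∧ FirstAfter (matchedPos M) i j ∧
        w j = true ∧ M1 = insert (i, j) M := by
    cases h1 with
    | step hi hw hj hj1 => exact ⟨_, _, hi, hw, hj, hj1, rfl⟩
  obtain ⟨i', j', hi', hwi', hj', hwj', rfl⟩ :
      ∃ i j, i ∉ matchedPos M ∧ w i = false ∧ FirstAfter (matchedPos M) i j ∧
        w j = true ∧ M2 = insert (i, j) M := by
    cases h2 with
    | step hi hw hj hj1 => exact ⟨_, _, hi, hw, hj, hj1, rfl⟩
  by_cases hii' : i = i'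
  · subst hii'
    left
    rw [firstAfter_unique hj hj']
  · -- all four positions distinct
    have hji' : j ≠ i' := fun h => by rw [h] at hwj; rw [hwj] at hwi'; exact Bool.noConfusion hwi'
    have hj'i : j' ≠ i := fun h => by rw [h] at hwj'; rw [hwj'] at hwi; exact Bool.noConfusion hwi
    have hjj' : j ≠ j' := fun h => by
      subst h
      exact firstAfter_ne hii' hji' hi hi' hj hj'
    have hij : i ≠ j := fun h => by rw [h] at hwi; rw [hwi] at hwj; exact Bool.noConfusion hwj
    have hi'j' : i' ≠ j' := fun h => by
      rw [h] at hwi'; rw [hwi'] at hwj'; exact Bool.noConfusion hwj'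
    right
    refine ⟨insert (i', j') (insert (i, j) M), ?_, ?_⟩
    · refine MatchStep.step ?_ hwi' (firstAfter_mono (subset_matchedPos_insert _ _) ?_ hj') hwj'
      · rw [matchedPos_insert]
        simp only [Finset.mem_insert]
        push_neg
        exact ⟨Ne.symm hii', Ne.symm hji', hi'⟩
      · rw [matchedPos_insert]
        simp only [Finset.mem_insert]
        push_neg
        exact ⟨hj'i, Ne.symm hjj', hj'.1⟩
    · rw [Finset.insert_comm]
      refine MatchStep.step ?_ hwi (firstAfter_mono (subset_matchedPos_insert _ _) ?_ hj) hwj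
      · rw [matchedPos_insert]
        simp only [Finset.mem_insert]
        push_neg
        exact ⟨hii', Ne.symm hj'i, hi⟩
      · rw [matchedPos_insert]
        simp only [Finset.mem_insert]
        push_neg
        exact ⟨hji', hjj', hj.1⟩

lemma matchStep_strip {w : Word n} {a b d : Finset (Fin n × Fin n)}
    (hab : Relation.ReflTransGen (MatchStep w) a b)
    (hb : ∀ M', ¬ MatchStep w b M') (had : MatchStep w a d) :
    Relation.ReflTransGen (MatchStep w) d b := by
  induction hab using Relation.ReflTransGen.head_induction_on generalizing d with
  | refl => exact absurd had (hb d)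
  | head hstep htail ih =>
    rcases matchStep_diamond had hstep with rfl | ⟨N, hdN, hN⟩
    · exact htail
    · exact Relation.ReflTransGen.head hdN (ih hN)

lemma matchStep_reach_normal {w : Word n} {a b c : Finset (Fin n × Fin n)}
    (hab : Relation.ReflTransGen (MatchStep w) a b)
    (hb : ∀ M', ¬ MatchStep w b M')
    (hac : Relation.ReflTransGen (MatchStep w) a c) :
    Relation.ReflTransGen (MatchStep w) c b := by
  induction hac using Relation.ReflTransGen.head_induction_on with
  | refl => exact hab
  | head hstep _ ih => exact ih (matchStep_strip hab hb hstep)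

/-- Any two maximal executions of the cyclic matching procedure on a
binary word `w` of length `n ≥ 1` produce the same set of matched pairs; hence the set of
matched pairs of `w` (and so also its set of unmatched positions) is well-defined,
independent of the order in which matchings are performed. -/
theorem maximalMatching_unique (n : ℕ) [NeZero n] (w : Word n)
    (M M' : Finset (Fin n × Fin n))
    (hM : IsMaximalMatching w M) (hM' : IsMaximalMatching w M') :
    M = M' := by
  obtain ⟨hM1, hM2⟩ := hM
  obtain ⟨hM'1, hM'2⟩ := hM'
  have h := matchStep_reach_normal hM1 hM2 hM'1
  rcases Relation.ReflTransGen.cases_head h with rfl | ⟨c, hc, _⟩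
  · rfl
  · exact absurd hc (hM'2 c)
end

section
/- The map φ is injective on the upper half of ranks: if u and u′ are necklaces of length n with 2·rank(u) > n and 2·rank(u′) > n and φ(u) = φ(u′), then u = u′. -/
variable {n : ℕ} [NeZero n]

/-! ### Auxiliary development for Statement 5 -/

set_option linter.unusedSectionVars false

namespace Phi5

variable {n : ℕ} [NeZero n]

/-! #### Fin arithmetic -/

lemma sub_val_eq (a b : Fin n) :
    (a - b).val = if b.val ≤ a.val then a.val - b.val else a.val + n - b.val := by
  have hb := b.isLt; have ha := a.isLt
  rw [Fin.sub_def]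
  simp only [Fin.val_mk]
  split
  · have h : n - b.val + a.val = (a.val - b.val) + n := by omega
    rw [h, Nat.add_mod_right, Nat.mod_eq_of_lt (by omega)]
  · rw [Nat.mod_eq_of_lt (by omega)]; omega

lemma sub_val_eq_zero_iff {a b : Fin n} : (a - b).val = 0 ↔ a = b := by
  have h := sub_val_eq a b
  have ha := a.isLt; have hb := b.isLt
  constructor
  · intro h0; apply Fin.ext; split at h <;> omega
  · rintro rfl; split at h <;> omega

/-! #### The lexicographic order -/

lemma lexLE_refl (w : Word n) : lexLE w w := Or.inl rfl

lemma lexLE_total (w w' : Word n) : lexLE w w' ∨ lexLE w' w := by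
  by_cases h : w = w'
  · exact Or.inl (Or.inl h)
  · have hD : (Finset.univ.filter fun i => w i ≠ w' i).Nonempty := by
      rw [Finset.filter_nonempty_iff]
      simpa [funext_iff] using h
    set i := Finset.min' _ hD with hi
    have hmem : w i ≠ w' i := by
      have := Finset.min'_mem _ hD
      simpa using this
    have hpre : ∀ j : Fin n, j < i → w j = w' j := by
      intro j hj
      by_contra hne
      have : i ≤ j := Finset.min'_le _ j (by simpa using hne)
      exact absurd hj (not_lt.2 this)
    cases hw : w i
    · cases hw' : w' i
      · exact absurd (hw.trans hw'.symm) hmem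
      · exact Or.inr (Or.inr ⟨i, fun j hj => (hpre j hj).symm, hw', hw⟩)
    · cases hw' : w' i
      · exact Or.inl (Or.inr ⟨i, hpre, hw, hw'⟩)
      · exact absurd (hw.trans hw'.symm) hmem

lemma lexLE_antisymm {w w' : Word n} (h1 : lexLE w w') (h2 : lexLE w' w) : w = w' := by
  rcases h1 with h1 | ⟨i, hpre, hit, hif⟩
  · exact h1
  rcases h2 with h2 | ⟨i', hpre', hit', hif'⟩
  · exact h2.symm
  rcases lt_trichotomy i i' with h | h | h
  · have := hpre' i h
    rw [hit, hif] at this; exact absurd this (by simp)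
  · subst h; rw [hit'] at hif; exact absurd hif (by simp)
  · have := hpre i' h
    rw [hit', hif'] at this; exact absurd this (by simp)

lemma lexLE_trans {w₁ w₂ w₃ : Word n} (h1 : lexLE w₁ w₂) (h2 : lexLE w₂ w₃) : lexLE w₁ w₃ := by
  rcases h1 with rfl | ⟨i, hpre, hit, hif⟩
  · exact h2
  rcases h2 with rfl | ⟨i', hpre', hit', hif'⟩
  · exact Or.inr ⟨i, hpre, hit, hif⟩
  rcases lt_trichotomy i i' with h | h | h
  · refine Or.inr ⟨i, fun j hj => (hpre j hj).trans (hpre' j (hj.trans h)), hit, ?_⟩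
    rw [← hpre' i h]; exact hif
  · subst h; rw [hit'] at hif; exact absurd hif (by simp)
  · refine Or.inr ⟨i', fun j hj => (hpre j (hj.trans h)).trans (hpre' j hj), ?_, hif'⟩
    rw [hpre i' h]; exact hit'

lemma exists_lex_min {s : Finset (Fin n)} (hs : s.Nonempty) (f : Fin n → Word n) :
    ∃ i ∈ s, ∀ j ∈ s, lexLE (f i) (f j) := by
  induction hs using Finset.Nonempty.cons_induction with
  | singleton a => exact ⟨a, by simp, by simp [lexLE_refl]⟩
  | cons a s ha hs ih =>
    obtain ⟨i, his, hmin⟩ := ih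
    rcases lexLE_total (f a) (f i) with h | h
    · refine ⟨a, Finset.mem_cons_self a s, ?_⟩
      intro j hj
      rcases Finset.mem_cons.1 hj with rfl | hj
      · exact lexLE_refl _
      · exact lexLE_trans h (hmin j hj)
    · refine ⟨i, Finset.mem_cons.2 (Or.inr his), ?_⟩
      intro j hj
      rcases Finset.mem_cons.1 hj with rfl | hj
      · exact h
      · exact hmin j hj

lemma exists_lyndon_rot (w : Word n) : ∃ i : Fin n, IsLyndon (rot i w) := by
  obtain ⟨i, -, hmin⟩ := exists_lex_min (s := Finset.univ) ⟨0, Finset.mem_univ 0⟩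
    (fun i => rot i w)
  refine ⟨i, fun j => ?_⟩
  rw [rot_rot]
  exact hmin _ (Finset.mem_univ _)

lemma lyndonOf_isLyndon (w : Word n) : IsLyndon (lyndonOf w) := by
  rw [lyndonOf, dif_pos (exists_lyndon_rot w)]
  exact (exists_lyndon_rot w).choose_spec

lemma lyndonOf_is_rot (w : Word n) : ∃ i, rot i w = lyndonOf w := by
  rw [lyndonOf, dif_pos (exists_lyndon_rot w)]
  exact ⟨_, rfl⟩

lemma nec_lyndonOf (w : Word n) : nec (lyndonOf w) = nec w := by
  obtain ⟨i, hi⟩ := lyndonOf_is_rot w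
  have h : nec w = nec (lyndonOf w) := Quotient.sound ⟨i, hi⟩
  exact h.symm

lemma nec_eq_iff {w w' : Word n} : nec w = nec w' ↔ ∃ i, rot i w = w' := by
  constructor
  · intro h; exact Quotient.exact h
  · intro h; exact Quotient.sound h

end Phi5
namespace Phi5
variable {n : ℕ} [NeZero n]

/-! #### Basic facts about `matchedPos` and matching steps -/

lemma mem_matchedPos {M : Finset (Fin n × Fin n)} {a : Fin n} :
    a ∈ matchedPos M ↔ ∃ p ∈ M, a = p.1 ∨ a = p.2 := by
  simp only [matchedPos, Finset.mem_union, Finset.mem_image]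
  constructor
  · rintro (⟨p, hp, rfl⟩ | ⟨p, hp, rfl⟩)
    exacts [⟨p, hp, Or.inl rfl⟩, ⟨p, hp, Or.inr rfl⟩]
  · rintro ⟨p, hp, rfl | rfl⟩
    exacts [Or.inl ⟨p, hp, rfl⟩, Or.inr ⟨p, hp, rfl⟩]

lemma matchedPos_mono {M N : Finset (Fin n × Fin n)} (h : M ⊆ N) :
    matchedPos M ⊆ matchedPos N := by
  intro a ha
  rw [mem_matchedPos] at *
  obtain ⟨p, hp, hap⟩ := ha
  exact ⟨p, h hp, hap⟩

lemma matchedPos_insert (p : Fin n × Fin n) (M : Finset (Fin n × Fin n)) :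
    matchedPos (insert p M) = insert p.1 (insert p.2 (matchedPos M)) := by
  ext a
  simp only [mem_matchedPos, Finset.mem_insert]
  constructor
  · rintro ⟨q, rfl | hq, h⟩
    · tauto
    · exact Or.inr (Or.inr ⟨q, hq, h⟩)
  · rintro (rfl | rfl | ⟨q, hq, h⟩)
    · exact ⟨p, Or.inl rfl, Or.inl rfl⟩
    · exact ⟨p, Or.inl rfl, Or.inr rfl⟩
    · exact ⟨q, Or.inr hq, h⟩

/-- Reachability by matching steps from the empty matching. -/
abbrev Reach (w : Word n) (M : Finset (Fin n × Fin n)) : Prop :=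
  Relation.ReflTransGen (MatchStep w) ∅ M

lemma reach_subset {w : Word n} {A B : Finset (Fin n × Fin n)}
    (h : Relation.ReflTransGen (MatchStep w) A B) : A ⊆ B := by
  induction h with
  | refl => exact Finset.Subset.refl _
  | tail _ hs ih =>
    cases hs with
    | step _ _ _ _ => exact ih.trans (Finset.subset_insert _ _)

/-- The run invariant: letters of pairs, injectivity of endpoints, and the nesting
property (every position strictly inside a matched pair is matched). -/
structure Inv (w : Word n) (M : Finset (Fin n × Fin n)) : Prop where
  fst_false : ∀ p ∈ M, w p.1 = false
  snd_true : ∀ p ∈ M, w p.2 = true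
  fst_inj : ∀ p ∈ M, ∀ q ∈ M, p.1 = q.1 → p = q
  snd_inj : ∀ p ∈ M, ∀ q ∈ M, p.2 = q.2 → p = q
  nest : ∀ p ∈ M, ∀ k, StrictBtw p.1 k p.2 → k ∈ matchedPos M

lemma Inv.step {w : Word n} {M N : Finset (Fin n × Fin n)} (hI : Inv w M)
    (hs : MatchStep w M N) : Inv w N := by
  cases hs with
  | @step i j hi hw hj hj1 =>
    have hjM : j ∉ matchedPos M := hj.1
    constructor
    · rintro p hp
      rcases Finset.mem_insert.1 hp with rfl | hp
      · exact hw
      · exact hI.fst_false p hp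
    · rintro p hp
      rcases Finset.mem_insert.1 hp with rfl | hp
      · exact hj1
      · exact hI.snd_true p hp
    · rintro p hp q hq h
      rcases Finset.mem_insert.1 hp with rfl | hp <;>
        rcases Finset.mem_insert.1 hq with rfl | hq
      · rfl
      · exact absurd (mem_matchedPos.2 ⟨q, hq, Or.inl h⟩) hi
      · exact absurd (mem_matchedPos.2 ⟨p, hp, Or.inl h.symm⟩) hi
      · exact hI.fst_inj p hp q hq h
    · rintro p hp q hq h
      rcases Finset.mem_insert.1 hp with rfl | hp <;>
        rcases Finset.mem_insert.1 hq with rfl | hq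
      · rfl
      · exact absurd (mem_matchedPos.2 ⟨q, hq, Or.inr h⟩) hjM
      · exact absurd (mem_matchedPos.2 ⟨p, hp, Or.inr h.symm⟩) hjM
      · exact hI.snd_inj p hp q hq h
    · rintro p hp k hk
      rcases Finset.mem_insert.1 hp with rfl | hp
      · -- new pair: use minimality of `FirstAfter`
        obtain ⟨hk0, hklt⟩ := hk
        have hk0' : 0 < (k - i).val := hk0
        have hklt' : (k - i).val < (j - i).val := hklt
        have hki : k ≠ i := fun h => by
          rw [h] at hk0; simp [sub_val_eq_zero_iff.2 rfl] at hk0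
        by_contra hkM
        have hkM' : k ∉ matchedPos M := fun h =>
          hkM (matchedPos_mono (Finset.subset_insert _ _) h)
        have := hj.2.2 k hkM' hki
        omega
      · exact matchedPos_mono (Finset.subset_insert _ _) (hI.nest p hp k hk)

lemma inv_of_reach {w : Word n} {M : Finset (Fin n × Fin n)} (h : Reach w M) : Inv w M := by
  induction h with
  | refl =>
    constructor <;> simp [matchedPos]
  | tail _ hs ih => exact ih.step hs

/-! #### Uniqueness of the maximal matching -/

lemma firstAfter_unique {S : Finset (Fin n)} {i j j' : Fin n}
    (h : FirstAfter S i j) (h' : FirstAfter S i j') : j = j' := by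
  have h1 := h.2.2 j' h'.1 h'.2.1
  have h2 := h'.2.2 j h.1 h.2.1
  have : j - i = j' - i := Fin.ext (le_antisymm h1 h2)
  exact sub_left_inj.1 this

lemma firstAfter_mono {S S' : Finset (Fin n)} {i j : Fin n} (hsub : S ⊆ S')
    (hj : j ∉ S') (h : FirstAfter S i j) : FirstAfter S' i j :=
  ⟨hj, h.2.1, fun k hk hki => h.2.2 k (fun hkS => hk (hsub hkS)) hki⟩

lemma firstAfter_j_ne {S : Finset (Fin n)} {i i' j : Fin n}
    (hne : i ≠ i') (hi : i ∉ S) (hi' : i' ∉ S) (hji' : j ≠ i')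
    (h : FirstAfter S i j) (h' : FirstAfter S i' j) : False := by
  have h1 := h.2.2 i' hi' (Ne.symm hne)
  have h2 := h'.2.2 i hi hne
  have hji := h.2.1
  have e1 := sub_val_eq j i
  have e2 := sub_val_eq i' i
  have e3 := sub_val_eq j i'
  have e4 := sub_val_eq i i'
  have hv1 : i.val ≠ i'.val := fun h => hne (Fin.ext h)
  have hv2 : j.val ≠ i.val := fun h => hji (Fin.ext h)
  have hv3 : j.val ≠ i'.val := fun h => hji' (Fin.ext h)
  have := j.isLt; have := i.isLt; have := i'.isLt
  rw [e1, e2] at h1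
  rw [e3, e4] at h2
  split_ifs at h1 h2 <;> omega

lemma step_diamond {w : Word n} {M N₁ N₂ : Finset (Fin n × Fin n)}
    (hs1 : MatchStep w M N₁) (hs2 : MatchStep w M N₂) :
    N₁ = N₂ ∨ ∃ P, MatchStep w N₁ P ∧ MatchStep w N₂ P := by
  cases hs1 with
  | @step i j hi hw hj hj1 =>
    cases hs2 with
    | @step i' j' hi' hw' hj' hj1' =>
      by_cases hii : i = i'
      · subst hii
        rw [firstAfter_unique hj hj']
        exact Or.inl rfl
      · -- all four positions are distinct
        have hji' : j ≠ i' := fun h => by rw [h, hw'] at hj1; exact absurd hj1 (by simp)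
        have hj'i : j' ≠ i := fun h => by rw [h, hw] at hj1'; exact absurd hj1' (by simp)
        have hjj' : j ≠ j' := by
          intro h
          exact firstAfter_j_ne hii hi hi' hji' hj (h ▸ hj')
        have hij : i ≠ j := fun h => by rw [← h, hw] at hj1; exact absurd hj1 (by simp)
        have hij' : i' ≠ j' := fun h => by rw [← h, hw'] at hj1'; exact absurd hj1' (by simp)
        refine Or.inr ⟨insert (i', j') (insert (i, j) M), ?_, ?_⟩
        · refine MatchStep.step (i := i') (j := j') ?_ hw' ?_ hj1'
          · rw [matchedPos_insert]
            simp only [Finset.mem_insert]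
            push_neg
            exact ⟨Ne.symm hii, fun h => hji' h.symm, hi'⟩
          · refine firstAfter_mono (matchedPos_mono (Finset.subset_insert _ _)) ?_ hj'
            rw [matchedPos_insert]
            simp only [Finset.mem_insert]
            push_neg
            exact ⟨hj'i, Ne.symm hjj', hj'.1⟩
        · rw [Finset.insert_comm]
          refine MatchStep.step (i := i) (j := j) ?_ hw ?_ hj1
          · rw [matchedPos_insert]
            simp only [Finset.mem_insert]
            push_neg
            exact ⟨hii, fun h => hj'i h.symm, hi⟩
          · refine firstAfter_mono (matchedPos_mono (Finset.subset_insert _ _)) ?_ hj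
            rw [matchedPos_insert]
            simp only [Finset.mem_insert]
            push_neg
            exact ⟨hji', hjj', hj.1⟩

lemma reach_eq_of_nostep {w : Word n} {A B : Finset (Fin n × Fin n)}
    (h : Relation.ReflTransGen (MatchStep w) A B) (hA : ∀ C, ¬ MatchStep w A C) : A = B := by
  rcases h.cases_head with rfl | ⟨c, hc, -⟩
  · rfl
  · exact absurd hc (hA c)

lemma maximal_unique {w : Word n} {M₁ M₂ : Finset (Fin n × Fin n)}
    (h1 : IsMaximalMatching w M₁) (h2 : IsMaximalMatching w M₂) : M₁ = M₂ := by
  obtain ⟨d, hd1, hd2⟩ := Relation.church_rosser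
    (fun a b c hab hac => by
      rcases step_diamond hab hac with rfl | ⟨P, hP1, hP2⟩
      · exact ⟨b, Relation.ReflGen.refl, Relation.ReflTransGen.refl⟩
      · exact ⟨P, Relation.ReflGen.single hP1, Relation.ReflTransGen.single hP2⟩)
    h1.1 h2.1
  have e1 := reach_eq_of_nostep hd1 h1.2
  have e2 := reach_eq_of_nostep hd2 h2.2
  rw [e1, e2]

/-! #### Existence of a maximal matching -/

lemma step_card {w : Word n} {M N : Finset (Fin n × Fin n)} (hs : MatchStep w M N) :
    N.card = M.card + 1 := by
  cases hs with
  | @step i j hi hw hj hj1 =>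
    have : (i, j) ∉ M := fun h => hi (mem_matchedPos.2 ⟨(i, j), h, Or.inl rfl⟩)
    rw [Finset.card_insert_of_notMem this]

lemma exists_maximal (w : Word n) : ∃ M, IsMaximalMatching w M := by
  suffices h : ∀ k (M : Finset (Fin n × Fin n)), Reach w M →
      (Finset.univ : Finset (Fin n × Fin n)).card ≤ M.card + k →
      ∃ N, IsMaximalMatching w N by
    exact h (Finset.univ : Finset (Fin n × Fin n)).card ∅ Relation.ReflTransGen.refl (by simp)
  intro k
  induction k with
  | zero =>
    intro M hM hcard
    refine ⟨M, hM, fun N hN => ?_⟩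
    have hle := Finset.card_le_univ M
    have hcu : (Finset.univ : Finset (Fin n × Fin n)).card = Fintype.card (Fin n × Fin n) :=
      Finset.card_univ
    have hMuniv : M = Finset.univ := Finset.eq_univ_of_card M (by omega)
    cases hN with
    | @step i j hi hw hj hj1 =>
      exact hi (mem_matchedPos.2 ⟨(i, i), by rw [hMuniv]; exact Finset.mem_univ _, Or.inl rfl⟩)
  | succ k ih =>
    intro M hM hcard
    by_cases hstep : ∃ N, MatchStep w M N
    · obtain ⟨N, hN⟩ := hstep
      exact ih N (hM.tail hN) (by have := step_card hN; omega)
    · push_neg at hstep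
      exact ⟨M, hM, hstep⟩

lemma matching_spec (w : Word n) : IsMaximalMatching w (matching w) := by
  rw [matching]
  rw [dif_pos (exists_maximal w)]
  exact (exists_maximal w).choose_spec

lemma inv_matching (w : Word n) : Inv w (matching w) := inv_of_reach (matching_spec w).1

lemma mem_unmatchedPos {w : Word n} {a : Fin n} :
    a ∈ unmatchedPos w ↔ a ∉ matchedPos (matching w) := by
  simp [unmatchedPos]

end Phi5
namespace Phi5
variable {n : ℕ} [NeZero n]

/-! #### Equivariance under rotation -/

/-- Shift both components of a pair. -/
def sp (c : Fin n) (p : Fin n × Fin n) : Fin n × Fin n := (p.1 + c, p.2 + c)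

lemma sp_sp (c : Fin n) (p : Fin n × Fin n) : sp (-c) (sp c p) = p := by
  simp [sp]

lemma rot_zero (w : Word n) : rot 0 w = w := by
  funext j; simp [rot]

lemma rot_neg_rot (c : Fin n) (w : Word n) : rot (-c) (rot c w) = w := by
  rw [rot_rot, add_neg_cancel, rot_zero]

lemma matchedPos_image (c : Fin n) (M : Finset (Fin n × Fin n)) :
    matchedPos (M.image (sp c)) = (matchedPos M).image (· + c) := by
  unfold matchedPos
  rw [Finset.image_image, Finset.image_image, Finset.image_union,
    Finset.image_image, Finset.image_image]
  rfl

lemma firstAfter_image {S : Finset (Fin n)} {i j : Fin n} (c : Fin n)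
    (h : FirstAfter S i j) : FirstAfter (S.image (· + c)) (i + c) (j + c) := by
  refine ⟨?_, ?_, ?_⟩
  · intro hmem
    obtain ⟨y, hy, hyc⟩ := Finset.mem_image.1 hmem
    have : y = j := by
      have := add_right_cancel hyc; exact this
    exact h.1 (this ▸ hy)
  · intro hc
    exact h.2.1 (add_right_cancel hc)
  · intro k hk hki
    have hk' : k - c ∉ S := fun hmem => hk (Finset.mem_image.2 ⟨k - c, hmem, by simp⟩)
    have hki' : k - c ≠ i := fun h' => hki (by rw [← h']; simp)
    have := h.2.2 (k - c) hk' hki'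
    have e1 : j + c - (i + c) = j - i := by abel
    have e2 : k - (i + c) = k - c - i := by abel
    rw [e1, e2]
    exact this

lemma step_image {w : Word n} {M N : Finset (Fin n × Fin n)} (c : Fin n)
    (hs : MatchStep w M N) : MatchStep (rot c w) (M.image (sp c)) (N.image (sp c)) := by
  cases hs with
  | @step i j hi hw hj hj1 =>
    rw [Finset.image_insert]
    have hrot : ∀ a : Fin n, rot c w (a + c) = w a := fun a => by
      simp [rot]
    refine MatchStep.step (i := i + c) (j := j + c) ?_ (by rw [hrot]; exact hw) ?_
      (by rw [hrot]; exact hj1)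
    · rw [matchedPos_image]
      intro hmem
      obtain ⟨y, hy, hyc⟩ := Finset.mem_image.1 hmem
      exact hi (add_right_cancel hyc ▸ hy)
    · rw [matchedPos_image]
      exact firstAfter_image c hj

lemma maximal_image {w : Word n} {M : Finset (Fin n × Fin n)} (c : Fin n)
    (h : IsMaximalMatching w M) : IsMaximalMatching (rot c w) (M.image (sp c)) := by
  constructor
  · have : ∀ A B, Relation.ReflTransGen (MatchStep w) A B →
        Relation.ReflTransGen (MatchStep (rot c w)) (A.image (sp c)) (B.image (sp c)) := by
      intro A B hAB
      induction hAB with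
      | refl => exact Relation.ReflTransGen.refl
      | tail _ hs ih => exact ih.tail (step_image c hs)
    have := this ∅ M h.1
    simpa using this
  · intro N hN
    have := step_image (-c) hN
    rw [rot_neg_rot] at this
    rw [Finset.image_image] at this
    have him : (M.image (sp (-c) ∘ sp c)) = M := by
      have : sp (-c) ∘ sp c = id := funext (sp_sp c)
      rw [this, Finset.image_id]
    rw [him] at this
    exact h.2 _ this

lemma matching_rot (c : Fin n) (w : Word n) :
    matching (rot c w) = (matching w).image (sp c) :=
  maximal_unique (matching_spec _) (maximal_image c (matching_spec w))

lemma unmatchedPos_rot (c : Fin n) (w : Word n) :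
    unmatchedPos (rot c w) = (unmatchedPos w).image (· + c) := by
  rw [unmatchedPos, unmatchedPos, matching_rot c w, matchedPos_image]
  ext a
  rw [Finset.mem_image]
  constructor
  · intro ha
    obtain ⟨-, ha⟩ := Finset.mem_sdiff.1 ha
    refine ⟨a - c, Finset.mem_sdiff.2 ⟨Finset.mem_univ _,
      fun hm => ha (Finset.mem_image.2 ⟨a - c, hm, by simp⟩)⟩, by simp⟩
  · rintro ⟨y, hy, rfl⟩
    obtain ⟨-, hy2⟩ := Finset.mem_sdiff.1 hy
    refine Finset.mem_sdiff.2 ⟨Finset.mem_univ _, fun hm => ?_⟩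
    obtain ⟨z, hz, hzc⟩ := Finset.mem_image.1 hm
    exact hy2 (add_right_cancel hzc ▸ hz)

/-! #### Unmatched positions: monochromaticity and counting -/

lemma unmatched_mono {w : Word n} {a b : Fin n} (ha : a ∈ unmatchedPos w)
    (hb : b ∈ unmatchedPos w) (hwa : w a = false) (hwb : w b = true) : False := by
  -- choose a pair (i, j) of unmatched positions with `w i = 0`, `w j = 1`
  -- minimizing the cyclic distance
  classical
  set P := (Finset.univ : Finset (Fin n × Fin n)).filter
    (fun p => p.1 ∈ unmatchedPos w ∧ p.2 ∈ unmatchedPos w ∧ w p.1 = false ∧ w p.2 = true)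
    with hP
  have hPne : P.Nonempty := ⟨(a, b), by simp [hP, ha, hb, hwa, hwb]⟩
  obtain ⟨p, hp, hpmin⟩ := Finset.exists_min_image P (fun p => (p.2 - p.1).val) hPne
  simp only [hP, Finset.mem_filter] at hp
  obtain ⟨-, hp1, hp2, hpw1, hpw2⟩ := hp
  set i := p.1
  set j := p.2
  have hij : i ≠ j := fun h => by rw [h, hpw2] at hpw1; exact absurd hpw1 (by simp)
  have hiM : i ∉ matchedPos (matching w) := mem_unmatchedPos.1 hp1
  have hjM : j ∉ matchedPos (matching w) := mem_unmatchedPos.1 hp2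
  have hstep : MatchStep w (matching w) (insert (i, j) (matching w)) := by
    refine MatchStep.step hiM hpw1 ⟨hjM, Ne.symm hij, ?_⟩ hpw2
    intro k hk hki
    by_contra hlt
    push_neg at hlt
    have hkU : k ∈ unmatchedPos w := mem_unmatchedPos.2 hk
    have hkj : k ≠ j := by
      intro h; rw [h] at hlt; omega
    cases hwk : w k
    · -- (k, j) is a closer pair
      have hmem : (k, j) ∈ P := by simp [hP, hkU, hp2, hwk, hpw2]
      have := hpmin _ hmem
      simp only at this
      -- (j - k).val < (j - i).val
      have e1 := sub_val_eq j k
      have e2 := sub_val_eq j i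
      have e3 := sub_val_eq k i
      have hvki : k.val ≠ i.val := fun h => hki (Fin.ext h)
      have hvkj : k.val ≠ j.val := fun h => hkj (Fin.ext h)
      have hvij : i.val ≠ j.val := fun h => hij (Fin.ext h)
      have := j.isLt; have := i.isLt; have := k.isLt
      split_ifs at e1 e2 e3 <;> omega
    · -- (i, k) is a closer pair
      have hmem : (i, k) ∈ P := by simp [hP, hkU, hp1, hwk, hpw1]
      have := hpmin _ hmem
      simp only at this
      omega
  exact (matching_spec w).2 _ hstep

lemma unmatched_all_true {w : Word n} (hmaj : zeros w < wt w) :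
    ∀ a ∈ unmatchedPos w, w a = true := by
  intro a ha
  by_contra h
  have hwa : w a = false := by
    cases hwa : w a
    · rfl
    · exact absurd hwa h
  -- every unmatched position is false; count
  have hallf : ∀ b ∈ unmatchedPos w, w b = false := by
    intro b hb
    cases hwb : w b
    · rfl
    · exact absurd (unmatched_mono ha hb hwa hwb) not_false
  -- true positions are all matched, i.e. of the form p.2
  have hinj := (inv_matching w).snd_inj
  have himg : (Finset.univ.filter fun i => w i = true) = (matching w).image Prod.snd := by
    ext b
    simp only [Finset.mem_filter, Finset.mem_univ, true_and, Finset.mem_image]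
    constructor
    · intro hb
      have hbm : b ∈ matchedPos (matching w) := by
        by_contra hbm
        have := hallf b (mem_unmatchedPos.2 hbm)
        rw [this] at hb; exact absurd hb (by simp)
      obtain ⟨p, hp, hbp⟩ := mem_matchedPos.1 hbm
      rcases hbp with rfl | rfl
      · rw [(inv_matching w).fst_false p hp] at hb; exact absurd hb (by simp)
      · exact ⟨p, hp, rfl⟩
    · rintro ⟨p, hp, rfl⟩
      exact (inv_matching w).snd_true p hp
  have himgf : (matching w).image Prod.fst ⊆ Finset.univ.filter fun i => w i = false := by
    intro b hb
    obtain ⟨p, hp, rfl⟩ := Finset.mem_image.1 hb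
    simp only [Finset.mem_filter, Finset.mem_univ, true_and]
    exact (inv_matching w).fst_false p hp
  have hcard1 : wt w = (matching w).card := by
    rw [wt, himg, Finset.card_image_of_injOn]
    intro p hp q hq h
    exact hinj p hp q hq h
  have hcard2 : (matching w).card ≤ zeros w := by
    rw [zeros]
    calc (matching w).card = ((matching w).image Prod.fst).card := by
          rw [Finset.card_image_of_injOn]
          intro p hp q hq h
          exact (inv_matching w).fst_inj p hp q hq h
      _ ≤ _ := Finset.card_le_card himgf
  omega

lemma wt_parts (w : Word n) : wt w + zeros w = n := by
  rw [wt, zeros]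
  rw [← Finset.card_union_of_disjoint]
  · have : (Finset.univ.filter fun i => w i = true) ∪ (Finset.univ.filter fun i => w i = false)
        = Finset.univ := by
      ext a
      simp only [Finset.mem_union, Finset.mem_filter, Finset.mem_univ, true_and, iff_true]
      cases h : w a
      · exact Or.inr rfl
      · exact Or.inl rfl
    rw [this, Finset.card_univ, Fintype.card_fin]
  · rw [Finset.disjoint_filter]
    intro a _ h1 h2
    rw [h1] at h2; exact absurd h2 (by simp)

lemma card_unmatched {w : Word n} (hmaj : zeros w < wt w) :
    (unmatchedPos w).card = wt w - zeros w := by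
  have hT := unmatched_all_true hmaj
  -- matched trues = image snd, card = card matching; matched falses = image fst
  have hfalse : (Finset.univ.filter fun i => w i = false) = (matching w).image Prod.fst := by
    ext b
    simp only [Finset.mem_filter, Finset.mem_univ, true_and, Finset.mem_image]
    constructor
    · intro hb
      have hbm : b ∈ matchedPos (matching w) := by
        by_contra hbm
        have := hT b (mem_unmatchedPos.2 hbm)
        rw [this] at hb; exact absurd hb (by simp)
      obtain ⟨p, hp, hbp⟩ := mem_matchedPos.1 hbm
      rcases hbp with rfl | rfl
      · exact ⟨p, hp, rfl⟩
      · rw [(inv_matching w).snd_true p hp] at hb; exact absurd hb (by simp)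
    · rintro ⟨p, hp, rfl⟩
      exact (inv_matching w).fst_false p hp
  have hzcard : zeros w = (matching w).card := by
    rw [zeros, hfalse, Finset.card_image_of_injOn]
    intro p hp q hq h
    exact (inv_matching w).fst_inj p hp q hq h
  -- matchedPos = image fst ∪ image snd, disjoint, each of card = card matching
  have hdisj : Disjoint ((matching w).image Prod.fst) ((matching w).image Prod.snd) := by
    rw [Finset.disjoint_left]
    rintro a ha hb
    obtain ⟨p, hp, rfl⟩ := Finset.mem_image.1 ha
    obtain ⟨q, hq, hqa⟩ := Finset.mem_image.1 hb
    have h1 := (inv_matching w).fst_false p hp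
    have h2 := (inv_matching w).snd_true q hq
    rw [hqa] at h2
    rw [h1] at h2; exact absurd h2 (by simp)
  have hmcard : (matchedPos (matching w)).card = 2 * (matching w).card := by
    rw [matchedPos, Finset.card_union_of_disjoint hdisj]
    rw [Finset.card_image_of_injOn, Finset.card_image_of_injOn]
    · omega
    · intro p hp q hq h; exact (inv_matching w).snd_inj p hp q hq h
    · intro p hp q hq h; exact (inv_matching w).fst_inj p hp q hq h
  have hucard : (unmatchedPos w).card = n - (matchedPos (matching w)).card := by
    rw [unmatchedPos, Finset.card_sdiff_of_subset]
    · rw [Finset.card_univ, Fintype.card_fin]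
    · exact Finset.subset_univ _
  have hwz := wt_parts w
  have hle : (matchedPos (matching w)).card ≤ n := by
    have := Finset.card_le_univ (matchedPos (matching w))
    rwa [Fintype.card_fin] at this
  omega

lemma unmatched_nonempty {w : Word n} (hmaj : zeros w < wt w) :
    (unmatchedPos w).Nonempty := by
  rw [← Finset.card_pos, card_unmatched hmaj]
  omega

end Phi5
namespace Phi5
variable {n : ℕ} [NeZero n]

/-! #### Weight lemmas -/

lemma wt_rot (c : Fin n) (w : Word n) : wt (rot c w) = wt w := by
  have himg : (Finset.univ.filter fun i => rot c w i = true)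
      = (Finset.univ.filter fun i => w i = true).image (· + c) := by
    ext a
    simp only [Finset.mem_filter, Finset.mem_univ, true_and, Finset.mem_image, rot]
    constructor
    · intro h
      exact ⟨a - c, (Finset.mem_filter.1 h).2, by simp⟩
    · rintro ⟨y, hy, rfl⟩
      exact Finset.mem_filter.2 ⟨Finset.mem_univ _, by simpa using hy⟩
  rw [wt, wt, himg, Finset.card_image_of_injective _ fun x y h => by
    exact add_right_cancel h]

lemma zeros_rot (c : Fin n) (w : Word n) : zeros (rot c w) = zeros w := by
  have h1 := wt_parts (rot c w)
  have h2 := wt_parts w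
  have h3 := wt_rot c w
  omega

lemma wt_update_false {w : Word n} {p : Fin n} (hp : w p = true) :
    wt (Function.update w p false) + 1 = wt w := by
  have himg : (Finset.univ.filter fun i => Function.update w p false i = true)
      = (Finset.univ.filter fun i => w i = true).erase p := by
    ext a
    simp only [Finset.mem_filter, Finset.mem_univ, true_and, Finset.mem_erase]
    by_cases hap : a = p
    · subst hap
      simp [Function.update_self]
    · simp [Function.update_of_ne hap, hap]
  rw [wt, himg, Finset.card_erase_of_mem (by simp [hp]), wt]
  have : p ∈ Finset.univ.filter fun i => w i = true := by simp [hp]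
  have hpos := Finset.card_pos.2 ⟨p, this⟩
  omega

/-! #### Transferring a run to a word which agrees on matched positions -/

lemma reach_of_agree {w w' : Word n} {M : Finset (Fin n × Fin n)} (h : Reach w M)
    (hag : ∀ a ∈ matchedPos M, w a = w' a) : Reach w' M := by
  induction h with
  | refl => exact Relation.ReflTransGen.refl
  | @tail B C hr hs ih =>
    cases hs with
    | @step i j hi hw hj hj1 =>
      have hsub : matchedPos B ⊆ matchedPos (insert (i, j) B) :=
        matchedPos_mono (Finset.subset_insert _ _)
      have ihr : Reach w' B := ih fun a ha => hag a (hsub ha)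
      have hiC : i ∈ matchedPos (insert (i, j) B) := by
        rw [matchedPos_insert]; simp
      have hjC : j ∈ matchedPos (insert (i, j) B) := by
        rw [matchedPos_insert]; simp
      exact ihr.tail (MatchStep.step hi (by rw [← hag i hiC]; exact hw) hj
        (by rw [← hag j hjC]; exact hj1))

/-! #### The matching of the flipped word -/

section Flip

variable {w : Word n} (hne : (unmatchedPos w).Nonempty)

lemma flipTop_eq : flipTop w = Function.update w ((unmatchedPos w).max' hne) false := by
  rw [flipTop, dif_pos hne]

lemma reach_flip : Reach (Function.update w ((unmatchedPos w).max' hne) false) (matching w) := by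
  refine reach_of_agree (matching_spec w).1 fun a ha => ?_
  have hp : (unmatchedPos w).max' hne ∈ unmatchedPos w := Finset.max'_mem _ _
  have : a ≠ (unmatchedPos w).max' hne := by
    intro h
    rw [h] at ha
    exact (mem_unmatchedPos.1 hp) ha
  rw [Function.update_of_ne this]

lemma matching_flip_card1 (hc : (unmatchedPos w).card = 1) :
    IsMaximalMatching (Function.update w ((unmatchedPos w).max' hne) false) (matching w) := by
  set p := (unmatchedPos w).max' hne with hp
  have hpU : p ∈ unmatchedPos w := Finset.max'_mem _ _
  have hU : unmatchedPos w = {p} := by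
    obtain ⟨a, ha⟩ := Finset.card_eq_one.1 hc
    rw [ha] at hpU ⊢
    rw [Finset.mem_singleton] at hpU
    rw [hpU]
  refine ⟨reach_flip hne, ?_⟩
  intro N hN
  cases hN with
  | @step i j hi hw hj hj1 =>
    have hiU : i ∈ unmatchedPos w := mem_unmatchedPos.2 hi
    have hjU : j ∈ unmatchedPos w := mem_unmatchedPos.2 hj.1
    rw [hU, Finset.mem_singleton] at hiU hjU
    exact hj.2.1 (hjU.trans hiU.symm)

lemma matching_flip_card2 (hT : ∀ a ∈ unmatchedPos w, w a = true)
    (hc : 2 ≤ (unmatchedPos w).card) :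
    IsMaximalMatching (Function.update w ((unmatchedPos w).max' hne) false)
      (insert ((unmatchedPos w).max' hne, (unmatchedPos w).min' hne) (matching w)) := by
  set p := (unmatchedPos w).max' hne with hp
  set q := (unmatchedPos w).min' hne with hq
  set x := Function.update w p false with hx
  have hpU : p ∈ unmatchedPos w := Finset.max'_mem _ _
  have hqU : q ∈ unmatchedPos w := Finset.min'_mem _ _
  have hqp : q.val < p.val := Finset.min'_lt_max'_of_card (unmatchedPos w) (by omega)
  have hqnep : q ≠ p := fun h => by rw [h] at hqp; omega
  have hstep : MatchStep x (matching w) (insert (p, q) (matching w)) := by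
    refine MatchStep.step (mem_unmatchedPos.1 hpU) (by rw [hx]; simp) ⟨mem_unmatchedPos.1 hqU, hqnep, ?_⟩
      (by rw [hx, Function.update_of_ne hqnep]; exact hT q hqU)
    intro k hk hki
    have hkU : k ∈ unmatchedPos w := mem_unmatchedPos.2 hk
    have hkle : k.val ≤ p.val := Finset.le_max' _ k hkU
    have hklt : k.val < p.val := by
      rcases lt_or_eq_of_le hkle with h | h
      · exact h
      · exact absurd (Fin.ext h) hki
    have hqk : q.val ≤ k.val := Finset.min'_le _ k hkU
    have e1 := sub_val_eq q p
    have e2 := sub_val_eq k p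
    split_ifs at e1 e2 <;> omega
  constructor
  · exact (reach_flip hne).tail hstep
  · intro N hN
    cases hN with
    | @step i j hi hw hj hj1 =>
      rw [matchedPos_insert] at hi
      simp only [Finset.mem_insert] at hi
      push_neg at hi
      obtain ⟨hip, hiq, hiM⟩ := hi
      have hiU : i ∈ unmatchedPos w := mem_unmatchedPos.2 hiM
      have : x i = true := by
        rw [hx, Function.update_of_ne hip]
        exact hT i hiU
      rw [this] at hw
      exact absurd hw (by simp)

end Flip

end Phi5
namespace Phi5
variable {n : ℕ} [NeZero n]

/-! #### Arc geometry helpers -/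

lemma strictBtw_of_not {a b k : Fin n} (hab : a ≠ b) (hka : k ≠ a) (hkb : k ≠ b)
    (h : ¬ StrictBtw a k b) : StrictBtw b k a := by
  unfold StrictBtw at *
  push_neg at h
  have hv1 : k.val ≠ a.val := fun hh => hka (Fin.ext hh)
  have hv2 : k.val ≠ b.val := fun hh => hkb (Fin.ext hh)
  have hv3 : a.val ≠ b.val := fun hh => hab (Fin.ext hh)
  have := k.isLt; have := a.isLt; have := b.isLt
  have hpos : 0 < (k - a).val := by rw [sub_val_eq]; split_ifs <;> omega
  have h' := h hpos
  rw [sub_val_eq b a, sub_val_eq k a] at h'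
  rw [sub_val_eq k b, sub_val_eq a b]
  split_ifs at h' ⊢ <;> omega

lemma strictBtw_linear {a k b : Fin n} (h : StrictBtw a k b) (hab : a.val < b.val) :
    a.val < k.val ∧ k.val < b.val := by
  obtain ⟨h1, h2⟩ := h
  have e1 := sub_val_eq k a
  have e2 := sub_val_eq b a
  have := k.isLt; have := a.isLt; have := b.isLt
  rw [e1] at h1 h2
  rw [e2] at h2
  split_ifs at h1 h2 <;> omega

lemma rot_update (c : Fin n) (w : Word n) (a : Fin n) (v : Bool) :
    rot c (Function.update w a v) = Function.update (rot c w) (a + c) v := by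
  funext j
  by_cases hj : j = a + c
  · subst hj
    rw [Function.update_self, rot]
    have : a + c - c = a := by abel
    rw [this, Function.update_self]
  · rw [Function.update_of_ne hj, rot, rot, Function.update_of_ne]
    intro hh
    exact hj (by rw [← hh]; abel)

/-! #### The key rigidity lemma -/

theorem rot_flip_eq {L L' : Word n} (hL : IsLyndon L) (hL' : IsLyndon L')
    (hmaj : zeros L < wt L) (hmaj' : zeros L' < wt L') {c : Fin n}
    (hc : rot c (flipTop L) = flipTop L') : rot c L = L' := by
  have hneL : (unmatchedPos L).Nonempty := unmatched_nonempty hmaj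
  have hneL' : (unmatchedPos L').Nonempty := unmatched_nonempty hmaj'
  have hTL := unmatched_all_true hmaj
  have hTL' := unmatched_all_true hmaj'
  set p := (unmatchedPos L).max' hneL with hpdef
  set p' := (unmatchedPos L').max' hneL' with hp'def
  set x := Function.update L p false with hxdef
  set x' := Function.update L' p' false with hx'def
  rw [flipTop_eq hneL, flipTop_eq hneL', ← hpdef, ← hp'def, ← hxdef, ← hx'def] at hc
  have hpU : p ∈ unmatchedPos L := Finset.max'_mem _ _
  have hp'U : p' ∈ unmatchedPos L' := Finset.max'_mem _ _
  have hLp : L p = true := hTL p hpU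
  have hL'p' : L' p' = true := hTL' p' hp'U
  have hLx : L = Function.update x p true := by
    funext a
    by_cases ha : a = p
    · subst ha; rw [Function.update_self, hLp]
    · rw [Function.update_of_ne ha, hxdef, Function.update_of_ne ha]
  have hL'x' : L' = Function.update x' p' true := by
    funext a
    by_cases ha : a = p'
    · subst ha; rw [Function.update_self, hL'p']
    · rw [Function.update_of_ne ha, hx'def, Function.update_of_ne ha]
  have hwtx : wt x + 1 = wt L := by rw [hxdef]; exact wt_update_false hLp
  have hwtx' : wt x' + 1 = wt L' := by rw [hx'def]; exact wt_update_false hL'p'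
  have hwt : wt L = wt L' := by
    have := wt_rot c x
    rw [hc] at this
    omega
  have hzeros : zeros L = zeros L' := by
    have h1 := wt_parts L; have h2 := wt_parts L'; omega
  have hcardU : (unmatchedPos L).card = (unmatchedPos L').card := by
    rw [card_unmatched hmaj, card_unmatched hmaj', hwt, hzeros]
  -- it suffices to show that the flipped positions correspond
  suffices hpp : p' = p + c by
    rw [hLx, hL'x', hpp]
    funext a
    by_cases ha : a = p + c
    · subst ha
      have h1 : p + c - c = p := by abel
      rw [rot, h1, Function.update_self, Function.update_self]
    · have ha' : a - c ≠ p := fun hh => ha (by rw [← hh]; abel)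
      rw [rot, Function.update_of_ne ha', Function.update_of_ne ha, ← hc, rot]
  -- case on the number of unmatched positions
  rcases show (unmatchedPos L).card = 1 ∨ 2 ≤ (unmatchedPos L).card by
      have := Finset.card_pos.2 hneL; omega with hcard1 | hcard2
  · -- one unmatched position
    have hmx : matching x = matching L :=
      maximal_unique (matching_spec x) (matching_flip_card1 hneL hcard1)
    have hmx' : matching x' = matching L' :=
      maximal_unique (matching_spec x') (matching_flip_card1 hneL' (by omega))
    have hUx : unmatchedPos x = unmatchedPos L := by
      rw [unmatchedPos, unmatchedPos, hmx]
    have hUx' : unmatchedPos x' = unmatchedPos L' := by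
      rw [unmatchedPos, unmatchedPos, hmx']
    have hrotU : unmatchedPos x' = (unmatchedPos x).image (· + c) := by
      rw [← hc, unmatchedPos_rot]
    have hUL : unmatchedPos L = {p} := by
      obtain ⟨a, ha⟩ := Finset.card_eq_one.1 hcard1
      have := hpU
      rw [ha, Finset.mem_singleton] at this
      rw [ha, this]
    have hUL' : unmatchedPos L' = {p'} := by
      obtain ⟨a, ha⟩ := Finset.card_eq_one.1 (show (unmatchedPos L').card = 1 by omega)
      have := hp'U
      rw [ha, Finset.mem_singleton] at this
      rw [ha, this]
    rw [hUx, hUx', hUL, hUL', Finset.image_singleton] at hrotU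
    exact Finset.singleton_injective hrotU
  · -- at least two unmatched positions
    set q := (unmatchedPos L).min' hneL with hqdef
    set q' := (unmatchedPos L').min' hneL' with hq'def
    have hcard2' : 2 ≤ (unmatchedPos L').card := by omega
    have hmx : matching x = insert (p, q) (matching L) :=
      maximal_unique (matching_spec x) (matching_flip_card2 hneL hTL hcard2)
    have hmx' : matching x' = insert (p', q') (matching L') :=
      maximal_unique (matching_spec x') (matching_flip_card2 hneL' hTL' hcard2')
    have hrotM : matching x' = (matching x).image (sp c) := by
      rw [← hc, matching_rot]
    by_contra hppc
    -- the two special pairs, in the frame of `x`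
    set t0 := p' - c with ht0def
    set u0 := q' - c with hu0def
    have hp'tc : p' = t0 + c := by rw [ht0def]; abel
    have hq'uc : q' = u0 + c := by rw [hu0def]; abel
    have ht0p : t0 ≠ p := fun h => hppc (by rw [hp'tc, h])
    have h1 : (t0, u0) ∈ matching x := by
      have hmem : (p', q') ∈ matching x' := by rw [hmx']; exact Finset.mem_insert_self _ _
      rw [hrotM] at hmem
      obtain ⟨pr, hpr, hspr⟩ := Finset.mem_image.1 hmem
      have hpr1 : pr.1 = t0 := by
        have : pr.1 + c = p' := congrArg Prod.fst hspr
        rw [← this] at ht0def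
        rw [ht0def]; abel
      have hpr2 : pr.2 = u0 := by
        have : pr.2 + c = q' := congrArg Prod.snd hspr
        rw [← this] at hu0def
        rw [hu0def]; abel
      have : pr = (t0, u0) := Prod.ext hpr1 hpr2
      rw [← this]; exact hpr
    have ht0u0L : (t0, u0) ∈ matching L := by
      rw [hmx] at h1
      rcases Finset.mem_insert.1 h1 with heq | h
      · exact absurd (congrArg Prod.fst heq) ht0p
      · exact h
    -- the word K
    set K := rot (-c) L' with hKdef
    have hKx : K = Function.update x t0 true := by
      rw [hKdef]
      conv_lhs => rw [hL'x']
      rw [rot_update, ← hc, rot_neg_rot]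
      have he : p' + -c = t0 := by rw [ht0def]; abel
      rw [he]
    have h2 : (p, q) ∈ matching K := by
      have hmem : sp c (p, q) ∈ matching x' := by
        rw [hrotM]
        exact Finset.mem_image_of_mem _ (by rw [hmx]; exact Finset.mem_insert_self _ _)
      rw [hmx'] at hmem
      rcases Finset.mem_insert.1 hmem with heq | h
      · refine absurd ?_ ht0p
        have hfst := congrArg Prod.fst heq
        simp only [sp] at hfst
        rw [hp'tc] at hfst
        exact (add_right_cancel hfst).symm
      · rw [hKdef, matching_rot]
        refine Finset.mem_image.2 ⟨(p + c, q + c), h, ?_⟩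
        simp only [sp]
        rw [Prod.mk.injEq]
        constructor <;> abel
    -- letters
    have hLt0 : L t0 = false := (inv_matching L).fst_false _ ht0u0L
    have hxt0 : x t0 = false := by
      rw [hxdef, Function.update_of_ne ht0p]; exact hLt0
    have hxp : x p = false := by rw [hxdef, Function.update_self]
    have hKt0 : K t0 = true := by rw [hKx, Function.update_self]
    have hKp : K p = false := by
      rw [hKx, Function.update_of_ne (Ne.symm ht0p)]; exact hxp
    have hag : ∀ a : Fin n, a ≠ p → a ≠ t0 → L a = K a := by
      intro a h1' h2'
      rw [hLx, hKx, Function.update_of_ne h1', Function.update_of_ne h2']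
    -- unmatched positions of K
    have hUK : unmatchedPos K = (unmatchedPos L').image (· + -c) := by
      rw [hKdef, unmatchedPos_rot]
    have ht0U : t0 ∈ unmatchedPos K := by
      rw [hUK]
      refine Finset.mem_image.2 ⟨p', hp'U, ?_⟩
      rw [ht0def]; abel
    have hq'U : q' ∈ unmatchedPos L' := Finset.min'_mem _ _
    have hu0U : u0 ∈ unmatchedPos K := by
      rw [hUK]
      refine Finset.mem_image.2 ⟨q', hq'U, ?_⟩
      rw [hu0def]; abel
    have hqU : q ∈ unmatchedPos L := Finset.min'_mem _ _
    have hq'vp' : q'.val < p'.val := Finset.min'_lt_max'_of_card (unmatchedPos L') (by omega)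
    have hu0net0 : u0 ≠ t0 := by
      intro h
      rw [hu0def, ht0def] at h
      have := sub_left_inj.1 h
      rw [this] at hq'vp'
      omega
    -- majority for K
    have hmajK : zeros K < wt K := by
      rw [hKdef, wt_rot, zeros_rot]; exact hmaj'
    have hTK := unmatched_all_true hmajK
    -- max condition for K
    have hmaxK : ∀ s ∈ unmatchedPos K, (s + c).val ≤ p'.val := by
      intro s hs
      rw [hUK] at hs
      obtain ⟨y, hy, rfl⟩ := Finset.mem_image.1 hs
      have : y + -c + c = y := by abel
      rw [this]
      exact Finset.le_max' _ y hy
    -- nesting facts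
    have hnoUL : ∀ k ∈ unmatchedPos L, ¬ StrictBtw t0 k u0 := fun k hk hbtw =>
      (mem_unmatchedPos.1 hk) ((inv_matching L).nest _ ht0u0L k hbtw)
    have hnoUK : ∀ k ∈ unmatchedPos K, ¬ StrictBtw p k q := fun k hk hbtw =>
      (mem_unmatchedPos.1 hk) ((inv_matching K).nest _ h2 k hbtw)
    -- basic distinctions
    have hqvp : q.val < p.val := Finset.min'_lt_max'_of_card (unmatchedPos L) (by omega)
    have hLq : L q = true := hTL q hqU
    have ht0q : t0 ≠ q := fun h => by rw [h, hLq] at hLt0; exact absurd hLt0 (by simp)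
    have hu0p : u0 ≠ p := by
      intro h
      rw [h] at hu0U
      have := hTK p hu0U
      rw [hKp] at this
      exact absurd this (by simp)
    have hu0q : u0 ≠ q := by
      intro h
      have hqm : q ∈ matchedPos (matching K) := mem_matchedPos.2 ⟨(p, q), h2, Or.inr rfl⟩
      rw [h] at hu0U
      exact (mem_unmatchedPos.1 hu0U) hqm
    -- linear positions of t0 and u0
    have hpq : p ≠ q := fun h => by rw [h] at hqvp; exact lt_irrefl _ hqvp
    have hbt0 : q.val < t0.val ∧ t0.val < p.val := by
      have h := hnoUK t0 ht0U
      have := strictBtw_of_not hpq ht0p ht0q h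
      exact ⟨(strictBtw_linear this hqvp).1, (strictBtw_linear this hqvp).2⟩
    have hbu0 : q.val < u0.val ∧ u0.val < p.val := by
      have h := hnoUK u0 hu0U
      have := strictBtw_of_not hpq hu0p hu0q h
      exact ⟨(strictBtw_linear this hqvp).1, (strictBtw_linear this hqvp).2⟩
    have ht0u0 : t0.val < u0.val := by
      have hne' : t0.val ≠ u0.val := fun h => hu0net0 (Fin.ext h.symm)
      by_contra hcon
      push_neg at hcon
      have hu0t0 : u0.val < t0.val := by omega
      apply hnoUL p hpU
      constructor
      · have e := sub_val_eq p t0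
        have := p.isLt; have := t0.isLt
        rw [e]; split_ifs <;> omega
      · have e1 := sub_val_eq p t0
        have e2 := sub_val_eq u0 t0
        have := p.isLt; have := t0.isLt; have := u0.isLt
        rw [e1, e2]; split_ifs <;> omega
    -- position of the Lyndon start of K
    set σ := -c with hσdef
    have hσ : t0.val < σ.val ∧ σ.val ≤ u0.val := by
      have hu := hmaxK u0 hu0U
      rw [hp'tc] at hu
      have hsu : u0 + c = u0 - σ := by rw [hσdef]; abel
      have hst : t0 + c = t0 - σ := by rw [hσdef]; abel
      rw [hsu, hst] at hu
      have e1 := sub_val_eq u0 σ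
      have e2 := sub_val_eq t0 σ
      have := u0.isLt; have := t0.isLt; have := σ.isLt
      rw [e1, e2] at hu
      split_ifs at hu <;> omega
    obtain ⟨hσ1, hσ2⟩ := hσ
    have hσp : σ.val < p.val := lt_of_le_of_lt hσ2 hbu0.2
    -- the lexicographic chain
    have hh1 : lexLE L (rot (-σ) L) := hL (-σ)
    have hrotL' : rot (-σ) K = L' := by
      rw [hσdef, neg_neg, hKdef, rot_rot, neg_add_cancel, rot_zero]
    have hh3 : lexLE (rot (-σ) K) K := by
      rw [hrotL', hKdef]
      exact hL' (-c)
    have hh2 : lexLE (rot (-σ) L) (rot (-σ) K) := by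
      refine Or.inr ⟨p - σ, ?_, ?_, ?_⟩
      · intro j hj
        simp only [rot]
        have hjs : j - -σ = j + σ := by abel
        rw [hjs]
        apply hag
        · intro hjp
          have hje : j = p - σ := by rw [← hjp]; abel
          rw [hje] at hj
          exact lt_irrefl _ hj
        · intro hjt
          have hje : j = t0 - σ := by rw [← hjt]; abel
          have hlt : j.val < (p - σ).val := hj
          rw [hje] at hlt
          have ep := sub_val_eq p σ
          have et := sub_val_eq t0 σ
          have := p.isLt; have := t0.isLt; have := σ.isLt
          rw [ep, et] at hlt
          split_ifs at hlt <;> omega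
      · show L (p - σ - -σ) = true
        have he : p - σ - -σ = p := by abel
        rw [he]; exact hLp
      · show K (p - σ - -σ) = false
        have he : p - σ - -σ = p := by abel
        rw [he]; exact hKp
    have hh4 : lexLE K L := by
      refine Or.inr ⟨t0, ?_, ?_, ?_⟩
      · intro j hj
        have hjv : j.val < t0.val := hj
        have hjp : j ≠ p := by
          intro h
          rw [h] at hjv
          omega
        exact (hag j hjp (ne_of_lt hj)).symm
      · exact hKt0
      · exact hLt0
    have hLK : L = K := lexLE_antisymm (lexLE_trans hh1 (lexLE_trans hh2 hh3)) hh4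
    have hfin := congrFun hLK p
    rw [hLp, hKp] at hfin
    exact absurd hfin (by simp)

end Phi5

/-- The map `φ` is injective on the upper half of ranks: if `u` and `u'`
are necklaces of length `n` with `2·rank u > n` and `2·rank u' > n` and
`φ(u) = φ(u')`, then `u = u'`. -/
theorem phi_injective_upper_half (n : ℕ) [NeZero n] (u u' : Necklace n)
    (hu : n < 2 * rank u) (hu' : n < 2 * rank u')
    (h : phi u = phi u') :
    u = u' := by
  classical
  rw [phi, phi] at h
  obtain ⟨c, hc⟩ := Phi5.nec_eq_iff.1 h
  have hmaj : zeros (lyndonOf (Quotient.out u)) < wt (lyndonOf (Quotient.out u)) := by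
    obtain ⟨i, hi⟩ := Phi5.lyndonOf_is_rot (Quotient.out u)
    have hwt : wt (lyndonOf (Quotient.out u)) = wt (Quotient.out u) := by
      rw [← hi, Phi5.wt_rot]
    have hparts := Phi5.wt_parts (lyndonOf (Quotient.out u))
    have hr : rank u = wt (Quotient.out u) := rfl
    omega
  have hmaj' : zeros (lyndonOf (Quotient.out u')) < wt (lyndonOf (Quotient.out u')) := by
    obtain ⟨i, hi⟩ := Phi5.lyndonOf_is_rot (Quotient.out u')
    have hwt : wt (lyndonOf (Quotient.out u')) = wt (Quotient.out u') := by
      rw [← hi, Phi5.wt_rot]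
    have hparts := Phi5.wt_parts (lyndonOf (Quotient.out u'))
    have hr : rank u' = wt (Quotient.out u') := rfl
    omega
  have hrot := Phi5.rot_flip_eq (Phi5.lyndonOf_isLyndon _) (Phi5.lyndonOf_isLyndon _)
    hmaj hmaj' hc
  have hne : nec (lyndonOf (Quotient.out u)) = nec (lyndonOf (Quotient.out u')) :=
    Phi5.nec_eq_iff.2 ⟨c, hrot⟩
  rw [Phi5.nec_lyndonOf, Phi5.nec_lyndonOf] at hne
  have e1 : nec (Quotient.out u) = u := Quotient.out_eq u
  have e2 : nec (Quotient.out u') = u' := Quotient.out_eq u'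
  rw [e1, e2] at hne
  exact hne
end

section
/- Let w be a Lyndon binary word of length n with strictly more 1's than 0's, let i be its rightmost unmatched position (carrying a 1), and let w′ be the word obtained from w by changing position i to 0. Then there exists a starting position j with j = 1 or j > i such that the rotation of w′ beginning at position j is lexicographically minimal among all rotations of w′; in other words, in passing to the Lyndon rearrangement of w′ the changed letter either keeps its position or moves to the right, never to the left. -/
variable {n : ℕ} [NeZero n]

/-! Auxiliary lemmas for Statement 7. -/

lemma rot_zero' (w : Word n) : rot 0 w = w := by funext j; simp [rot]

lemma rot_neg_apply (j : Fin n) (w : Word n) (p : Fin n) : rot (-j) w p = w (p + j) := by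
  simp [rot, sub_neg_eq_add]

lemma lexLE_refl (w : Word n) : lexLE w w := Or.inl rfl

lemma lexLE_trans {a b c : Word n} (h1 : lexLE a b) (h2 : lexLE b c) : lexLE a c := by
  rcases h1 with rfl | ⟨i, hib, ha, hb⟩
  · exact h2
  rcases h2 with rfl | ⟨i', hib', ha', hb'⟩
  · exact Or.inr ⟨i, hib, ha, hb⟩
  rcases lt_trichotomy i i' with h | rfl | h
  · refine Or.inr ⟨i, fun j hj => (hib j hj).trans (hib' j (hj.trans h)), ha, ?_⟩
    rw [← hib' i h]; exact hb
  · rw [hb] at ha'; exact absurd ha' (by simp)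
  · refine Or.inr ⟨i', fun j hj => (hib j (hj.trans h)).trans (hib' j hj), ?_, hb'⟩
    rw [hib i' h]; exact ha'

lemma lexLE_total (a b : Word n) : lexLE a b ∨ lexLE b a := by
  by_cases hab : a = b
  · exact Or.inl (Or.inl hab)
  have hS : (Finset.univ.filter fun q => a q ≠ b q).Nonempty := by
    by_contra h
    apply hab
    funext q
    by_contra hq
    exact h ⟨q, by simpa using hq⟩
  set p := (Finset.univ.filter fun q => a q ≠ b q).min' hS with hp
  have hpm : a p ≠ b p := by
    have := (Finset.univ.filter fun q => a q ≠ b q).min'_mem hS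
    simpa using this
  have hagree : ∀ j, j < p → a j = b j := by
    intro j hj
    by_contra hq
    exact absurd ((Finset.univ.filter fun q => a q ≠ b q).min'_le j (by simpa using hq))
      (not_le.2 hj)
  cases ha : a p with
  | false =>
    have hb : b p = true := by
      cases hbp : b p with
      | false => exact absurd (ha.trans hbp.symm) hpm
      | true => rfl
    exact Or.inr (Or.inr ⟨p, fun j hj => (hagree j hj).symm, hb, ha⟩)
  | true =>
    have hb : b p = false := by
      cases hbp : b p with
      | false => rfl
      | true => exact absurd (ha.trans hbp.symm) hpm
    exact Or.inl (Or.inr ⟨p, hagree, ha, hb⟩)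

lemma exists_min_word {β : Type*} [DecidableEq β] (s : Finset β) (hs : s.Nonempty)
    (f : β → Word n) : ∃ b ∈ s, ∀ c ∈ s, lexLE (f b) (f c) := by
  classical
  induction s using Finset.induction with
  | empty => exact absurd hs (by simp)
  | @insert a s ha ih =>
    rcases s.eq_empty_or_nonempty with rfl | hs'
    · refine ⟨a, Finset.mem_insert_self _ _, ?_⟩
      intro c hc
      rcases Finset.mem_insert.1 hc with rfl | hc
      · exact lexLE_refl _
      · exact absurd hc (by simp)
    · obtain ⟨b, hb, hmin⟩ := ih hs'
      rcases lexLE_total (f a) (f b) with h | h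
      · refine ⟨a, Finset.mem_insert_self _ _, ?_⟩
        intro c hc
        rcases Finset.mem_insert.1 hc with rfl | hc
        · exact lexLE_refl _
        · exact lexLE_trans h (hmin c hc)
      · refine ⟨b, Finset.mem_insert_of_mem hb, ?_⟩
        intro c hc
        rcases Finset.mem_insert.1 hc with rfl | hc
        · exact h
        · exact hmin c hc

lemma key_lemma (w : Word n) (hL : IsLyndon w) (i : Fin n) (hi : w i = true) (j : Fin n)
    (hj0 : j ≠ 0) (hji : j.val ≤ i.val) :
    lexLE (Function.update w i false) (rot (-j) (Function.update w i false)) := by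
  set w' := Function.update w i false with hw'
  have hw'i : w' i = false := Function.update_self i false w
  have hw'ne : ∀ q : Fin n, q ≠ i → w' q = w q := fun q hq => Function.update_of_ne hq _ _
  have hj1 : 1 ≤ j.val := Nat.pos_of_ne_zero (fun h => hj0 (Fin.ext h))
  set d : Fin n := i - j with hddef
  have hd : d.val = i.val - j.val := Fin.sub_val_of_le hji
  have hdji : d.val + j.val = i.val := by omega
  have hdi : d.val < i.val := by omega
  have hdj : d + j = i := sub_add_cancel i j
  have hadd : ∀ q : Fin n, q.val ≤ d.val → (q + j).val = q.val + j.val := by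
    intro q hq
    rw [Fin.val_add, Nat.mod_eq_of_lt]
    have := i.isLt
    omega
  have hqi : ∀ q : Fin n, q.val < i.val → q ≠ i := by
    intro q h heq
    rw [heq] at h
    omega
  have haj : ∀ q : Fin n, q.val < d.val → (q + j) ≠ i := by
    intro q hq heq
    have h1 := hadd q (le_of_lt hq)
    rw [heq] at h1
    omega
  have hstep : ∀ q : Fin n, q.val < d.val → w' q = w q ∧ rot (-j) w' q = w (q + j) := by
    intro q hq
    refine ⟨hw'ne q (hqi q (by omega)), ?_⟩
    rw [rot_neg_apply]
    exact hw'ne (q + j) (haj q hq)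
  by_cases hS : ∃ p : Fin n, p.val < d.val ∧ w p ≠ w (p + j)
  · -- first difference before d
    obtain ⟨p0, hp0⟩ := hS
    have hSne : (Finset.univ.filter fun p : Fin n =>
        p.val < d.val ∧ w p ≠ w (p + j)).Nonempty := ⟨p0, by simpa using hp0⟩
    set p := (Finset.univ.filter fun p : Fin n =>
        p.val < d.val ∧ w p ≠ w (p + j)).min' hSne with hpdef
    have hpmem : p.val < d.val ∧ w p ≠ w (p + j) :=
      (Finset.mem_filter.1 ((Finset.univ.filter fun p : Fin n =>
        p.val < d.val ∧ w p ≠ w (p + j)).min'_mem hSne)).2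
    have hmin : ∀ q : Fin n, q.val < p.val → w q = w (q + j) := by
      intro q hq
      by_contra hne
      have hqd : q.val < d.val := by omega
      have := (Finset.univ.filter fun p : Fin n =>
        p.val < d.val ∧ w p ≠ w (p + j)).min'_le q
        (Finset.mem_filter.2 ⟨Finset.mem_univ q, hqd, hne⟩)
      exact absurd this (not_le.2 (Fin.lt_def.2 hq))
    have hwp : w p = true := by
      cases hwp : w p with
      | true => rfl
      | false =>
        exfalso
        have hwpj : w (p + j) = true := by
          cases h : w (p + j) with
          | true => rfl
          | false => exact (hpmem.2 (hwp.trans h.symm)).elim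
        rcases hL (-j) with heq | ⟨e, hag, he, he'⟩
        · have := congrFun heq p
          rw [rot_neg_apply, hwp, hwpj] at this
          exact Bool.noConfusion this
        · rw [rot_neg_apply] at he'
          rcases lt_trichotomy e.val p.val with h | h | h
          · have := hmin e h
            rw [he, he'] at this
            exact Bool.noConfusion this
          · have : e = p := Fin.ext h
            rw [this, hwp] at he
            exact Bool.noConfusion he
          · have := hag p h
            rw [rot_neg_apply, hwp, hwpj] at this
            exact Bool.noConfusion this
    have hwpj : w (p + j) = false := by
      cases h : w (p + j) with
      | false => rfl
      | true => exact (hpmem.2 (hwp.trans h.symm)).elim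
    refine Or.inr ⟨p, ?_, ?_, ?_⟩
    · intro q hq
      have hq' : q.val < p.val := hq
      have hqd : q.val < d.val := by omega
      obtain ⟨h1, h2⟩ := hstep q hqd
      rw [h1, h2]
      exact hmin q hq'
    · rw [(hstep p hpmem.1).1, hwp]
    · rw [(hstep p hpmem.1).2, hwpj]
  · push_neg at hS
    have hwd : w d = true := by
      cases hwd : w d with
      | true => rfl
      | false =>
        exfalso
        rcases hL (-j) with heq | ⟨e, hag, he, he'⟩
        · have := congrFun heq d
          rw [rot_neg_apply, hdj, hwd, hi] at this
          exact Bool.noConfusion this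
        · rw [rot_neg_apply] at he'
          rcases lt_trichotomy e.val d.val with h | h | h
          · have := hS e h
            rw [he, he'] at this
            exact Bool.noConfusion this
          · have : e = d := Fin.ext h
            rw [this, hwd] at he
            exact Bool.noConfusion he
          · have := hag d h
            rw [rot_neg_apply, hdj, hwd, hi] at this
            exact Bool.noConfusion this
    refine Or.inr ⟨d, ?_, ?_, ?_⟩
    · intro q hq
      have hq' : q.val < d.val := hq
      obtain ⟨h1, h2⟩ := hstep q hq'
      rw [h1, h2]
      exact hS q hq'
    · rw [hw'ne d (hqi d hdi), hwd]
    · rw [rot_neg_apply, hdj, hw'i]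

/-- Let `w` be a Lyndon word with strictly more `1`s than `0`s, let `i`
be its rightmost unmatched position (carrying a `1`), and let `w'` be obtained from `w`
by changing position `i` to `0`.  Then there is a starting position `j` with `j` the
first position or `j > i` such that the rotation of `w'` beginning at position `j` is
lexicographically minimal among all rotations of `w'`: in passing to the Lyndon
rearrangement of `w'`, the changed letter keeps its position or moves right, never
left. -/
theorem changed_letter_moves_right (n : ℕ) [NeZero n] (w : Word n)
    (hL : IsLyndon w) (hmaj : zeros w < wt w)
    (hne : (unmatchedPos w).Nonempty)
    (i : Fin n) (hi : i = (unmatchedPos w).max' hne)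
    (w' : Word n) (hw' : w' = Function.update w i false) :
    ∃ j : Fin n, (j = 0 ∨ i < j) ∧
      ∀ k : Fin n, lexLE (rot (-j) w') (rot k w') := by
  by_cases hwi : w i = true
  · classical
    obtain ⟨k, -, hk⟩ := exists_min_word (n := n) Finset.univ ⟨0, Finset.mem_univ 0⟩
      (fun k : Fin n => rot k w')
    have hrw : rot (-(-k)) w' = rot k w' := by rw [neg_neg]
    by_cases hcond : (-k : Fin n) = 0 ∨ i < -k
    · exact ⟨-k, hcond, fun c => hrw ▸ hk c (Finset.mem_univ c)⟩
    · push_neg at hcond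
      obtain ⟨hj0ne, hj0le⟩ := hcond
      have hle : (-k : Fin n).val ≤ i.val := Fin.le_def.1 hj0le
      have hkey := key_lemma w hL i hwi (-k) hj0ne hle
      rw [← hw'] at hkey
      refine ⟨0, Or.inl rfl, ?_⟩
      intro c
      rw [neg_zero, rot_zero']
      exact lexLE_trans (hrw ▸ hkey) (hk c (Finset.mem_univ c))
  · have hwif : w i = false := by
      cases h : w i with
      | false => rfl
      | true => exact absurd h hwi
    have hww : w' = w := by
      subst hw'
      funext q
      by_cases hq : q = i
      · subst hq; rw [Function.update_self, hwif]
      · rw [Function.update_of_ne hq]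
    refine ⟨0, Or.inl rfl, ?_⟩
    intro k
    rw [neg_zero, rot_zero', hww]
    exact hL k
end
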